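/- Let {c_n}_{n∈ℕ} be a sequence with c_n ∈ (0,1/2), and for each k ∈ ℕ₀ let C^k be the generalised Cantor set generated by the shifted sequence {c_{n+k}}_{n∈ℕ}. Then the collection {C^k}_{k∈ℕ₀} is the pullback attractor of the non-autonomous iterated function system on ℝ given by f_{2k−1}(x) = c_k x and f_{2k}(x) = c_k x + 1 − c_k with index sets I_k = {2k−1, 2k} for each k ∈ ℕ. -/

import Mathlib

open Set Metric Filter Bornology MeasureTheory
open scoped ENNReal NNReal

/-- `cantorPre c k n = S^{k,k+n}([0,1])` : level-`n` of the construction of the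
generalised Cantor set generated by the shifted sequence `{c_{m+k}}_{m∈ℕ}`,
using the maps `x ↦ c_j x` and `x ↦ c_j x + 1 - c_j`.  Equivalently,
`cantorPre c k (n+1) = gen_{c_{k+n+1}}(cantorPre c k n)`. -/
def cantorPre (c : ℕ → ℝ) : ℕ → ℕ → Set ℝ
  | _, 0 => Set.Icc 0 1
  | k, n + 1 =>
      (fun x => c (k + 1) * x) '' cantorPre c (k + 1) n ∪
      (fun x => c (k + 1) * x + 1 - c (k + 1)) '' cantorPre c (k + 1) n

/-- `genCantor c k` is the generalised Cantor set generated by the sequence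
`{c_{n+k}}_{n∈ℕ}`. -/
def genCantor (c : ℕ → ℝ) (k : ℕ) : Set ℝ :=
  ⋂ n, cantorPre c k n

/-- The index sets `I_k = {2k-1, 2k}`. -/
def gcIndex (k : ℕ) : Finset ℕ := {2 * k - 1, 2 * k}

/-- The maps of the system: `f_{2k-1}(x) = c_k x` and
`f_{2k}(x) = c_k x + 1 - c_k`. -/
noncomputable def gcMap (c : ℕ → ℝ) (i : ℕ) : ℝ → ℝ :=
  if i % 2 = 1 then fun x => c ((i + 1) / 2) * x
  else fun x => c (i / 2) * x + 1 - c (i / 2)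

/-- `S^k(B) = ⋃_{i ∈ I_{k+1}} f_i(B)` for this system. -/
noncomputable def gcSstep (c : ℕ → ℝ) (k : ℕ) (B : Set ℝ) : Set ℝ :=
  ⋃ i ∈ gcIndex (k + 1), gcMap c i '' B

/-- `gcSiter c k n B = S^{k,k+n}(B)`. -/
noncomputable def gcSiter (c : ℕ → ℝ) : ℕ → ℕ → Set ℝ → Set ℝ
  | _, 0, B => B
  | k, n + 1, B => gcSstep c k (gcSiter c (k + 1) n B)

/-- Hausdorff semi-distance `ρ_H(A,B) = sup_{x ∈ A} inf_{y ∈ B} |x - y|`. -/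
noncomputable def semidist (A B : Set ℝ) : ℝ≥0∞ :=
  ⨆ x ∈ A, EMetric.infEdist x B

/-- `{F^k}` is a pullback attractor of the above non-autonomous IFS. -/
def IsPullbackAttractorGC (c : ℕ → ℝ) (F : ℕ → Set ℝ) : Prop :=
  (∀ k, IsCompact (F k)) ∧
  IsBounded (⋃ k, F k) ∧
  (∀ k, F k = gcSstep c k (F (k + 1))) ∧
  (∀ B : Set ℝ, IsBounded B → ∀ k,
    Tendsto (fun l => semidist (gcSiter c k (l - k) B) (F k)) atTop (nhds 0))

lemma gcSstep_eq (c : ℕ → ℝ) (k : ℕ) (B : Set ℝ) :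
    gcSstep c k B = (fun x => c (k + 1) * x) '' B ∪
      (fun x => c (k + 1) * x + 1 - c (k + 1)) '' B := by
  have h1 : 2 * (k + 1) - 1 = 2 * k + 1 := by omega
  have e1 : gcMap c (2 * k + 1) = fun x => c (k + 1) * x := by
    have : (2 * k + 1) % 2 = 1 := by omega
    have h4 : (2 * k + 1 + 1) / 2 = k + 1 := by omega
    simp [gcMap, this, h4]
  have e2 : gcMap c (2 * (k + 1)) = fun x => c (k + 1) * x + 1 - c (k + 1) := by
    have h2 : (2 * (k + 1)) % 2 = 0 := by omega
    have h3 : (2 * (k + 1)) / 2 = k + 1 := by omega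
    simp [gcMap, h2, h3]
  simp [gcSstep, gcIndex, h1, e1, e2]

lemma cantorPre_succ (c : ℕ → ℝ) (k n : ℕ) :
    cantorPre c k (n + 1) = gcSstep c k (cantorPre c (k + 1) n) := by
  rw [gcSstep_eq]; rfl

variable {c : ℕ → ℝ}

lemma cantorPre_subset_Icc (hc : ∀ n, 1 ≤ n → 0 < c n ∧ c n < 1 / 2) :
    ∀ n k, cantorPre c k n ⊆ Set.Icc 0 1 := by
  intro n
  induction n with
  | zero => intro k; exact subset_rfl
  | succ n ih =>
    intro k x hx
    obtain ⟨h0, h1⟩ := hc (k + 1) (by omega)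
    rcases hx with ⟨t, ht, rfl⟩ | ⟨t, ht, rfl⟩ <;> dsimp only <;>
      obtain ⟨ht0, ht1⟩ := ih (k + 1) ht <;>
      constructor <;> nlinarith

lemma cantorPre_antitone (hc : ∀ n, 1 ≤ n → 0 < c n ∧ c n < 1 / 2) :
    ∀ n k, cantorPre c k (n + 1) ⊆ cantorPre c k n := by
  intro n
  induction n with
  | zero => intro k; exact cantorPre_subset_Icc hc 1 k
  | succ n ih =>
    intro k
    exact Set.union_subset_union (Set.image_mono (ih (k + 1)))
      (Set.image_mono (ih (k + 1)))

lemma zero_mem_cantorPre : ∀ n k, (0 : ℝ) ∈ cantorPre c k n := by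
  intro n
  induction n with
  | zero => intro k; exact ⟨le_refl 0, zero_le_one⟩
  | succ n ih =>
    intro k
    exact Or.inl ⟨0, ih (k + 1), by simp⟩

lemma zero_mem_genCantor (k : ℕ) : (0 : ℝ) ∈ genCantor c k :=
  Set.mem_iInter.2 fun n => zero_mem_cantorPre n k

lemma cantorPre_isCompact : ∀ n k, IsCompact (cantorPre c k n) := by
  intro n
  induction n with
  | zero => intro k; exact isCompact_Icc
  | succ n ih =>
    intro k
    exact ((ih (k + 1)).image (by fun_prop)).union ((ih (k + 1)).image (by fun_prop))

lemma genCantor_isCompact (k : ℕ) : IsCompact (genCantor c k) := by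
  have hclosed : IsClosed (genCantor c k) :=
    isClosed_iInter fun n => (cantorPre_isCompact n k).isClosed
  exact isCompact_Icc.of_isClosed_subset hclosed (Set.iInter_subset _ 0)

lemma genCantor_invariance (hc : ∀ n, 1 ≤ n → 0 < c n ∧ c n < 1 / 2) (k : ℕ) :
    genCantor c k = gcSstep c k (genCantor c (k + 1)) := by
  obtain ⟨h0, h1⟩ := hc (k + 1) (by omega)
  have hne : c (k + 1) ≠ 0 := h0.ne'
  rw [gcSstep_eq]
  apply Set.Subset.antisymm
  · intro x hx
    have hx' : ∀ n, x ∈ cantorPre c k (n + 1) := fun n => Set.mem_iInter.1 hx (n + 1)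
    by_cases hcase : x ≤ c (k + 1)
    · left
      refine ⟨x / c (k + 1), Set.mem_iInter.2 fun n => ?_, by dsimp only; field_simp⟩
      rcases hx' n with ⟨t, ht, hxt⟩ | ⟨t, ht, hxt⟩ <;> dsimp only at hxt
      · have : t = x / c (k + 1) := by rw [eq_div_iff hne]; linear_combination hxt
        rwa [← this]
      · exfalso
        obtain ⟨ht0, ht1⟩ := cantorPre_subset_Icc hc n (k + 1) ht
        nlinarith
    · right
      refine ⟨(x - 1 + c (k + 1)) / c (k + 1), Set.mem_iInter.2 fun n => ?_,
        by dsimp only; field_simp; ring⟩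
      rcases hx' n with ⟨t, ht, hxt⟩ | ⟨t, ht, hxt⟩ <;> dsimp only at hxt
      · exfalso
        obtain ⟨ht0, ht1⟩ := cantorPre_subset_Icc hc n (k + 1) ht
        nlinarith
      · have : t = (x - 1 + c (k + 1)) / c (k + 1) := by
          rw [eq_div_iff hne]; linear_combination hxt
        rwa [← this]
  · intro x hx
    have key : ∀ n, ((fun x => c (k + 1) * x) '' genCantor c (k + 1) ∪
        (fun x => c (k + 1) * x + 1 - c (k + 1)) '' genCantor c (k + 1)) ⊆
        cantorPre c k (n + 1) := fun n =>
      Set.union_subset_union (Set.image_mono (Set.iInter_subset _ n))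
        (Set.image_mono (Set.iInter_subset _ n))
    apply Set.mem_iInter.2
    intro n
    cases n with
    | zero => exact cantorPre_antitone hc 0 k (key 0 hx)
    | succ n => exact key n hx

lemma gcSiter_approx (hc : ∀ n, 1 ≤ n → 0 < c n ∧ c n < 1 / 2) (R : ℝ) :
    ∀ n k (B : Set ℝ), (∀ b ∈ B, |b| ≤ R) → ∀ x ∈ gcSiter c k n B,
      ∃ y ∈ genCantor c k, |x - y| ≤ (1 / 2) ^ n * R := by
  intro n
  induction n with
  | zero =>
    intro k B hB x hx
    exact ⟨0, zero_mem_genCantor k, by simpa using hB x hx⟩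
  | succ n ih =>
    intro k B hB x hx
    rw [gcSiter, gcSstep_eq] at hx
    obtain ⟨h0, h1⟩ := hc (k + 1) (by omega)
    have key : ∀ t, t ∈ gcSiter c (k + 1) n B →
        ∃ y ∈ genCantor c (k + 1), |c (k + 1) * t - c (k + 1) * y| ≤ (1 / 2) ^ (n + 1) * R := by
      intro t ht
      obtain ⟨y, hy, hdy⟩ := ih (k + 1) B hB t ht
      refine ⟨y, hy, ?_⟩
      have he : c (k + 1) * t - c (k + 1) * y = c (k + 1) * (t - y) := by ring
      rw [he, abs_mul, abs_of_pos h0]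
      calc c (k + 1) * |t - y| ≤ (1 / 2) * ((1 / 2) ^ n * R) :=
            mul_le_mul h1.le hdy (abs_nonneg _) (by norm_num)
        _ = (1 / 2) ^ (n + 1) * R := by ring
    rcases hx with ⟨t, ht, rfl⟩ | ⟨t, ht, rfl⟩ <;> dsimp only <;>
      obtain ⟨y, hy, hdy⟩ := key t ht
    · refine ⟨c (k + 1) * y, ?_, hdy⟩
      rw [genCantor_invariance hc k, gcSstep_eq]
      exact Or.inl ⟨y, hy, rfl⟩
    · refine ⟨c (k + 1) * y + 1 - c (k + 1), ?_, by
        have : c (k + 1) * t + 1 - c (k + 1) - (c (k + 1) * y + 1 - c (k + 1)) =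
          c (k + 1) * t - c (k + 1) * y := by ring
        rw [this]; exact hdy⟩
      rw [genCantor_invariance hc k, gcSstep_eq]
      exact Or.inr ⟨y, hy, rfl⟩

lemma gc_attraction (hc : ∀ n, 1 ≤ n → 0 < c n ∧ c n < 1 / 2) (B : Set ℝ)
    (hB : IsBounded B) (k : ℕ) :
    Tendsto (fun l => semidist (gcSiter c k (l - k) B) (genCantor c k)) atTop (nhds 0) := by
  obtain ⟨R, hR⟩ := isBounded_iff_forall_norm_le.1 hB
  set R' := max R 0 with hR'
  have hbound : ∀ n, semidist (gcSiter c k n B) (genCantor c k) ≤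
      ENNReal.ofReal ((1 / 2) ^ n * R') := by
    intro n
    apply iSup₂_le
    intro x hx
    obtain ⟨y, hy, hxy⟩ := gcSiter_approx hc R' n k B
      (fun b hb => le_trans (by simpa [Real.norm_eq_abs] using hR b hb) (le_max_left _ _)) x hx
    calc EMetric.infEdist x (genCantor c k) ≤ edist x y := EMetric.infEdist_le_edist_of_mem hy
      _ = ENNReal.ofReal |x - y| := by rw [edist_dist, Real.dist_eq]
      _ ≤ _ := ENNReal.ofReal_le_ofReal hxy
  have hg : Tendsto (fun n : ℕ => ENNReal.ofReal ((1 / 2 : ℝ) ^ n * R')) atTop (nhds 0) := by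
    rw [← ENNReal.ofReal_zero]
    apply ENNReal.tendsto_ofReal
    have := (tendsto_pow_atTop_nhds_zero_of_lt_one (by norm_num : (0:ℝ) ≤ 1/2)
      (by norm_num : (1/2:ℝ) < 1)).mul_const R'
    simpa using this
  have hcomp : Tendsto (fun l : ℕ => l - k) atTop atTop := tendsto_sub_atTop_nat k
  exact tendsto_of_tendsto_of_tendsto_of_le_of_le tendsto_const_nhds (hg.comp hcomp)
    (fun l => zero_le) (fun l => hbound (l - k))

/-- The family of generalised Cantor sets `C^k`, where `C^k` is
generated by the shifted sequence `{c_{n+k}}_{n∈ℕ}`, is the pullback attractor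
of the non-autonomous IFS `f_{2k-1}(x) = c_k x`, `f_{2k}(x) = c_k x + 1 - c_k`
with `I_k = {2k-1, 2k}`. -/
theorem genCantor_isPullbackAttractor (c : ℕ → ℝ)
    (hc : ∀ n, 1 ≤ n → 0 < c n ∧ c n < 1 / 2) :
    IsPullbackAttractorGC c (fun k => genCantor c k) := by
  refine ⟨fun k => genCantor_isCompact k, ?_, fun k => genCantor_invariance hc k,
    fun B hB k => gc_attraction hc B hB k⟩
  exact (isBounded_Icc (0 : ℝ) 1).subset
    (Set.iUnion_subset fun k => Set.iInter_subset (cantorPre c k) 0)
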